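/- Let T ⊆ ℝ²≥0 be the triangle with vertices (4,0), (10,0), (7,3) and 𝔗 = ⋃_{i∈ℕ} (i·T) ∩ ℕ². With n₁ = (7,3) and n₂ = (4,0), the set Ap(n₁) ∩ Ap(n₂) equals {(0,0),(5,0),(6,0),(7,0),(5,1),(6,1),(7,1),(8,1),(6,2),(7,2),(8,2),(13,2)}, where Ap(n) = {s ∈ 𝔗 : s − n ∉ 𝔗}. -/

import Mathlib

open scoped Pointwise

def toQ (p : ℤ × ℤ) : ℚ × ℚ := ((p.1 : ℚ), (p.2 : ℚ))
def toR (p : ℤ × ℤ) : ℝ × ℝ := ((p.1 : ℝ), (p.2 : ℝ))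
def isNat (p : ℤ × ℤ) : Prop := 0 ≤ p.1 ∧ 0 ≤ p.2
def inCone (n₁ n₂ a : ℤ × ℤ) : Prop :=
  ∃ q₁ q₂ : ℚ, 0 ≤ q₁ ∧ 0 ≤ q₂ ∧ toQ a = q₁ • toQ n₁ + q₂ • toQ n₂
def onRay (n a : ℤ × ℤ) : Prop := ∃ q : ℚ, 0 ≤ q ∧ toQ a = q • toQ n


/-- The triangle with vertices `(4,0)`, `(10,0)`, `(7,3)`. -/
def tri3 : Set (ℝ × ℝ) :=
  convexHull ℝ {((4 : ℝ), (0 : ℝ)), ((10 : ℝ), (0 : ℝ)), ((7 : ℝ), (3 : ℝ))}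

def triSem3 : Set (ℤ × ℤ) :=
  {a : ℤ × ℤ | a = 0 ∨ ∃ i : ℕ, toR a ∈ (i : ℝ) • tri3}

lemma tri3_eq : tri3 = {p : ℝ × ℝ | 0 ≤ p.2 ∧ 4 ≤ p.1 - p.2 ∧ p.1 + p.2 ≤ 10} := by
  apply Set.Subset.antisymm
  · apply convexHull_min
    · rintro p (rfl | rfl | rfl) <;> norm_num
    · rintro ⟨x1, y1⟩ ⟨h1, h2, h3⟩ ⟨x2, y2⟩ ⟨h4, h5, h6⟩ a b ha hb hab
      simp only [Prod.smul_mk, Prod.mk_add_mk, smul_eq_mul, Set.mem_setOf_eq] at *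
      refine ⟨by positivity, ?_, ?_⟩ <;> nlinarith
  · rintro ⟨x, y⟩ ⟨h1, h2, h3⟩
    apply mem_convexHull_of_exists_fintype (ι := Fin 3)
      ![(10 - x - y) / 6, (x - y - 4) / 6, y / 3]
      ![((4 : ℝ), (0 : ℝ)), ((10 : ℝ), (0 : ℝ)), ((7 : ℝ), (3 : ℝ))]
    · intro i; fin_cases i <;> simp <;> linarith
    · simp [Fin.sum_univ_three]; ring
    · intro i; fin_cases i <;> simp
    · simp [Fin.sum_univ_three, Prod.ext_iff, Prod.smul_mk]; ring

lemma mem_triSem3 (a : ℤ × ℤ) :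
    a ∈ triSem3 ↔ ∃ i : ℕ, 0 ≤ a.2 ∧ a.1 + a.2 ≤ 10 * i ∧ 4 * i ≤ a.1 - a.2 := by
  obtain ⟨x, y⟩ := a
  constructor
  · rintro (h | ⟨i, hi⟩)
    · refine ⟨0, ?_⟩
      simp only [Prod.mk_eq_zero] at h
      obtain ⟨rfl, rfl⟩ := h
      norm_num
    · rcases Nat.eq_zero_or_pos i with rfl | hpos
      · rw [Nat.cast_zero, Set.zero_smul_set ⟨_, (by rw [tri3_eq]; norm_num : ((4:ℝ),(0:ℝ)) ∈ tri3)⟩] at hi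
        have hi' : ((x:ℝ), (y:ℝ)) = 0 := by simpa [toR] using hi
        rw [Prod.ext_iff] at hi'
        simp only [Prod.fst_zero, Prod.snd_zero] at hi'
        have hx : x = 0 := by exact_mod_cast hi'.1
        have hy : y = 0 := by exact_mod_cast hi'.2
        exact ⟨0, by simp [hx, hy]⟩
      · obtain ⟨b, hb, hab⟩ := hi
        rw [tri3_eq] at hb
        obtain ⟨hb1, hb2, hb3⟩ := hb
        have hi0 : (0:ℝ) < (i:ℝ) := by exact_mod_cast hpos
        have e1 : (i:ℝ) * b.1 = (x:ℝ) := congrArg Prod.fst hab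
        have e2 : (i:ℝ) * b.2 = (y:ℝ) := congrArg Prod.snd hab
        refine ⟨i, ?_, ?_, ?_⟩
        · have : (0:ℝ) ≤ (y:ℝ) := by nlinarith
          exact_mod_cast this
        · have : (x:ℝ) + (y:ℝ) ≤ 10 * (i:ℝ) := by nlinarith
          exact_mod_cast this
        · have : 4 * (i:ℝ) ≤ (x:ℝ) - (y:ℝ) := by nlinarith
          exact_mod_cast this
  · rintro ⟨i, hy, h10, h4⟩
    rcases Nat.eq_zero_or_pos i with rfl | hpos
    · left
      simp only [Nat.cast_zero, mul_zero] at h10 h4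
      have : x = 0 ∧ y = 0 := by omega
      simp [Prod.mk_eq_zero, this.1, this.2]
    · right
      refine ⟨i, ⟨((x:ℝ)/(i:ℝ), (y:ℝ)/(i:ℝ)), ?_, ?_⟩⟩
      · have hi0 : (0:ℝ) < (i:ℝ) := by exact_mod_cast hpos
        rw [tri3_eq]
        have c1 : (0:ℝ) ≤ (y:ℝ) := by exact_mod_cast hy
        have c2 : (x:ℝ) + (y:ℝ) ≤ 10 * (i:ℝ) := by exact_mod_cast h10
        have c3 : 4 * (i:ℝ) ≤ (x:ℝ) - (y:ℝ) := by exact_mod_cast h4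
        refine ⟨by positivity, ?_, ?_⟩
        · rw [div_sub_div_same, le_div_iff₀ hi0]; linarith
        · rw [← add_div, div_le_iff₀ hi0]; linarith
      · have hi0 : (i:ℝ) ≠ 0 := by positivity
        simp only [toR, Prod.smul_mk, smul_eq_mul]
        rw [mul_div_cancel₀ _ hi0, mul_div_cancel₀ _ hi0]

def ap3 (n : ℤ × ℤ) : Set (ℤ × ℤ) :=
  {s : ℤ × ℤ | s ∈ triSem3 ∧ s - n ∉ triSem3}

set_option maxHeartbeats 1000000 in
/-- Figure 4 example: `Ap((7,3)) ∩ Ap((4,0))` computed explicitly. -/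
theorem stmt14 :
    ap3 ((7 : ℤ), (3 : ℤ)) ∩ ap3 ((4 : ℤ), (0 : ℤ)) =
      ({((0 : ℤ), (0 : ℤ)), (5, 0), (6, 0), (7, 0),
        (5, 1), (6, 1), (7, 1), (8, 1),
        (6, 2), (7, 2), (8, 2), (13, 2)} : Set (ℤ × ℤ)) := by
  ext ⟨x, y⟩
  simp only [ap3, Set.mem_inter_iff, Set.mem_setOf_eq, Prod.mk_sub_mk, mem_triSem3,
    Set.mem_insert_iff, Set.mem_singleton_iff, Prod.mk.injEq, sub_zero]
  constructor
  · rintro ⟨⟨⟨i, hy, h10, h4⟩, h1⟩, -, h2⟩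
    push_neg at h1 h2
    rcases i with _ | k
    · simp only [Nat.cast_zero, mul_zero] at h10 h4
      omega
    · have hy2 : y ≤ 2 := by
        by_contra hcon
        have := h1 k (by omega) (by omega)
        omega
      have e1 := h2 (k + 1) hy (by omega)
      have key : 10 * (k : ℤ) < x - 4 + y := by
        by_contra hc
        push_neg at hc
        have := h2 k hy hc
        omega
      omega
  · rintro (⟨rfl, rfl⟩ | ⟨rfl, rfl⟩ | ⟨rfl, rfl⟩ | ⟨rfl, rfl⟩ | ⟨rfl, rfl⟩ | ⟨rfl, rfl⟩ |
      ⟨rfl, rfl⟩ | ⟨rfl, rfl⟩ | ⟨rfl, rfl⟩ | ⟨rfl, rfl⟩ | ⟨rfl, rfl⟩ | ⟨rfl, rfl⟩) <;>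
    first
      | exact ⟨⟨⟨0, by omega⟩, fun ⟨j, h1, h2, h3⟩ => by omega⟩,
          ⟨0, by omega⟩, fun ⟨j, h1, h2, h3⟩ => by omega⟩
      | exact ⟨⟨⟨1, by omega⟩, fun ⟨j, h1, h2, h3⟩ => by omega⟩,
          ⟨1, by omega⟩, fun ⟨j, h1, h2, h3⟩ => by omega⟩
      | exact ⟨⟨⟨2, by omega⟩, fun ⟨j, h1, h2, h3⟩ => by omega⟩,
          ⟨2, by omega⟩, fun ⟨j, h1, h2, h3⟩ => by omega⟩
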